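/- arXiv:2210.12406 — 3 statements merged into one kernel-verified Lean document; each statement's English description precedes it below -/
import Mathlib

section
/- If ω commutes with a Hermitian matrix H, then the curve t ↦ e^{tA} ω e^{−tA} has vanishing first derivative of tr(H ·) at t = 0 for every matrix A; conversely, if ω is a pure state and tr(A[ω,H]) = 0 for all A ∈ su(n), then ω is an eigenprojection of H (i.e., Hω = λω for some real λ). -/
open Matrix NormedSpace
open scoped ComplexOrder

section DerivAux

attribute [local instance]
  Matrix.linftyOpNormedRing Matrix.linftyOpNormedAlgebra

private lemma exp_deriv_aux {n : ℕ} (H ω A : Matrix (Fin n) (Fin n) ℂ) :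
    HasDerivAt (fun t : ℝ =>
      (H * (NormedSpace.exp (t • A) * ω * NormedSpace.exp (-(t • A)))).trace)
      ((H * (A * ω - ω * A)).trace) 0 := by
  have hg : HasDerivAt (fun t : ℝ => NormedSpace.exp (t • A)) (NormedSpace.exp ((0:ℝ) • A) * A) 0 :=
    hasDerivAt_exp_smul_const A 0
  have hh : HasDerivAt (fun t : ℝ => NormedSpace.exp (t • (-A))) (NormedSpace.exp ((0:ℝ) • (-A)) * (-A)) 0 :=
    hasDerivAt_exp_smul_const (-A) 0
  have hF := (hg.mul_const ω).mul hh
  let L : Matrix (Fin n) (Fin n) ℂ →ₗ[ℝ] ℂ :=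
    { toFun := fun X => (H * X).trace
      map_add' := fun x y => by simp [mul_add]
      map_smul' := fun c x => by simp [Matrix.mul_smul] }
  have hL := L.toContinuousLinearMap.hasFDerivAt.comp_hasDerivAt 0 hF
  simp only [LinearMap.coe_toContinuousLinearMap'] at hL
  have hL' : HasDerivAt (fun t : ℝ =>
      (H * (NormedSpace.exp (t • A) * ω * NormedSpace.exp (-(t • A)))).trace)
      (L (NormedSpace.exp ((0:ℝ) • A) * A * ω * NormedSpace.exp ((0:ℝ) • (-A)) +
        NormedSpace.exp ((0:ℝ) • A) * ω * (NormedSpace.exp ((0:ℝ) • (-A)) * (-A)))) 0 := by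
    simp [smul_neg, L] at hL ⊢; exact hL
  convert hL' using 1
  simp [L, zero_smul, exp_zero, mul_sub, sub_eq_add_neg, mul_neg]

end DerivAux

/-- If `ω` commutes with a Hermitian `H`, the curve `t ↦ e^{tA} ω e^{−tA}` has
vanishing first derivative of `tr (H ·)` at `t = 0` for every matrix `A`; conversely, if `ω`
is a pure state and `tr (A [ω, H]) = 0` for all `A ∈ su(n)`, then `ω` is an eigenprojection
of `H`. -/
theorem critical_point_characterization {n : ℕ}
    (H ω : Matrix (Fin n) (Fin n) ℂ)
    (hH : H.IsHermitian)
    (hω_psd : ω.PosSemidef) (hω_tr : ω.trace = 1) :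
    (ω * H = H * ω →
      ∀ A : Matrix (Fin n) (Fin n) ℂ,
        deriv (fun t : ℝ =>
          (H * (NormedSpace.exp (t • A) * ω * NormedSpace.exp (-(t • A)))).trace) 0 = 0) ∧
    (ω * ω = ω →
      (∀ A : Matrix (Fin n) (Fin n) ℂ, Aᴴ = -A → A.trace = 0 →
        (A * (ω * H - H * ω)).trace = 0) →
      ∃ lam : ℝ, H * ω = (lam : ℂ) • ω) := by
  constructor
  · -- Part 1
    intro hcomm A
    rw [(exp_deriv_aux H ω A).deriv]
    have : (H * (A * ω - ω * A)).trace
        = (A * (ω * H - H * ω)).trace := by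
      rw [mul_sub, mul_sub, trace_sub, trace_sub,
        ← mul_assoc, ← mul_assoc, ← mul_assoc, ← mul_assoc,
        trace_mul_cycle A ω H, trace_mul_cycle A H ω, trace_mul_cycle ω A H]
    rw [this, hcomm, sub_self]
    simp
  · -- Part 2
    intro hproj hcrit
    have hω := hω_psd.1
    set C := ω * H - H * ω with hCdef
    have hCskew : Cᴴ = -C := by
      simp only [hCdef, conjTranspose_sub, conjTranspose_mul, hH.eq, hω.eq, neg_sub]
    have hCtr : C.trace = 0 := by
      simp [hCdef, trace_sub, trace_mul_comm ω H]
    have h0 : (C * C).trace = 0 := hcrit C hCskew hCtr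
    have hC0 : C = 0 := by
      have h1 : (Cᴴ * C).trace = 0 := by
        rw [hCskew, neg_mul, trace_neg, h0, neg_zero]
      have h2 : (∑ i, ∑ j, (Complex.normSq (C j i) : ℂ)) = 0 := by
        rw [← h1, Matrix.trace]
        simp only [Matrix.diag, Matrix.mul_apply, Matrix.conjTranspose_apply]
        congr 1; ext i; congr 1; ext j
        rw [Complex.normSq_eq_conj_mul_self]; rfl
      have h3 : (∑ i, ∑ j, Complex.normSq (C j i)) = 0 := by
        exact_mod_cast h2
      ext i j
      have h4 := (Finset.sum_eq_zero_iff_of_nonneg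
        (fun i _ => Finset.sum_nonneg fun j _ => Complex.normSq_nonneg _)).mp h3
      have h5 := (Finset.sum_eq_zero_iff_of_nonneg
        (fun k _ => Complex.normSq_nonneg _)).mp (h4 j (Finset.mem_univ j))
      have := h5 i (Finset.mem_univ i)
      simpa [Complex.normSq_eq_zero] using this
    have hcomm : ω * H = H * ω := sub_eq_zero.mp hC0
    -- spectral decomposition of ω
    set U : Matrix (Fin n) (Fin n) ℂ := (hω.eigenvectorUnitary : Matrix (Fin n) (Fin n) ℂ)
      with hUdef
    set μ : Fin n → ℝ := hω.eigenvalues with hμdef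
    have hU1 : U * star U = 1 := (mem_unitaryGroup_iff).mp hω.eigenvectorUnitary.2
    have hU2 : star U * U = 1 := (mem_unitaryGroup_iff').mp hω.eigenvectorUnitary.2
    have hspec : ω = U * diagonal (RCLike.ofReal ∘ μ) * star U := hω.spectral_theorem
    set D : Matrix (Fin n) (Fin n) ℂ := diagonal (RCLike.ofReal ∘ μ) with hDdef
    have cancel : ∀ M : Matrix (Fin n) (Fin n) ℂ, star U * (U * M * star U) * U = M := by
      intro M
      calc star U * (U * M * star U) * U = star U * U * M * (star U * U) := by
            simp only [mul_assoc]
        _ = M := by rw [hU2, one_mul, mul_one]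
    have hDD : D * D = D := by
      have h6 : U * (D * D) * star U = U * D * star U := by
        conv_rhs => rw [← hspec, ← hproj, hspec]
        rw [show (U * D * star U) * (U * D * star U)
            = U * D * (star U * U) * D * star U from by noncomm_ring, hU2]
        noncomm_ring
      have := congrArg (fun X => star U * X * U) h6
      simpa only [cancel] using this
    have hval : ∀ i, μ i = 0 ∨ μ i = 1 := by
      intro i
      have h8 : ((μ i : ℝ) : ℂ) * ((μ i : ℝ) : ℂ) = ((μ i : ℝ) : ℂ) := by
        have hij := Matrix.ext_iff.mpr hDD i i
        simpa [hDdef, Matrix.diagonal_mul_diagonal, Matrix.diagonal_apply_eq] using hij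
      have h9 : μ i * μ i = μ i := by exact_mod_cast h8
      have : μ i * (μ i - 1) = 0 := by rw [mul_sub, mul_one, h9, sub_self]
      rcases mul_eq_zero.mp this with h | h
      · exact Or.inl h
      · exact Or.inr (by linarith)
    have htr : (∑ i, μ i) = 1 := by
      have h10 : ω.trace = D.trace := by
        rw [hspec, trace_mul_cycle, hU2, one_mul]
      have h11 : (∑ i, (μ i : ℂ)) = 1 := by
        rw [← hω_tr, h10, hDdef, trace_diagonal]; rfl
      exact_mod_cast h11
    obtain ⟨i₀, hi₀⟩ : ∃ i, μ i = 1 := by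
      by_contra h
      push_neg at h
      have : ∀ i ∈ Finset.univ, μ i = 0 := fun i _ =>
        (hval i).resolve_right (h i)
      rw [Finset.sum_eq_zero this] at htr
      norm_num at htr
    have hzero : ∀ i, i ≠ i₀ → μ i = 0 := by
      intro i hi
      rcases hval i with h | h
      · exact h
      · exfalso
        have hsub : ({i, i₀} : Finset (Fin n)) ⊆ Finset.univ := Finset.subset_univ _
        have hpair : (∑ j ∈ ({i, i₀} : Finset (Fin n)), μ j) = 2 := by
          rw [Finset.sum_pair hi, h, hi₀]; norm_num
        have hnn : ∀ j ∈ Finset.univ, j ∉ ({i, i₀} : Finset (Fin n)) → 0 ≤ μ j := by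
          intro j _ _
          rcases hval j with h' | h' <;> simp [h']
        have := Finset.sum_le_sum_of_subset_of_nonneg hsub hnn
        rw [hpair, htr] at this
        linarith
    set d : Fin n → ℂ := fun i => if i = i₀ then 1 else 0 with hddef
    have hd : (RCLike.ofReal ∘ μ : Fin n → ℂ) = d := by
      funext i
      by_cases h : i = i₀
      · subst h; simp [hddef, hi₀]
      · simp [hddef, h, hzero i h]
    have hωeq : ω = U * diagonal d * star U := by rw [hspec, hDdef, hd]
    have hdiag : ∀ N : Matrix (Fin n) (Fin n) ℂ,
        diagonal d * N * diagonal d = (N i₀ i₀) • diagonal d := by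
      intro N
      ext i j
      rw [Matrix.mul_apply]
      simp only [Matrix.mul_diagonal, Matrix.diagonal_mul, Matrix.smul_apply,
        Matrix.diagonal_apply, hddef, smul_eq_mul]
      rcases eq_or_ne i i₀ with hi | hi
      · rcases eq_or_ne j i₀ with hj | hj
        · subst hi; subst hj
          simp [Finset.sum_ite_eq', mul_ite, mul_one, mul_zero]
        · subst hi
          simp [hj, Ne.symm hj, Finset.sum_ite_eq', mul_ite, mul_one, mul_zero]
      · simp [hi]
    set c : ℂ := (star U * H * U) i₀ i₀ with hcdef
    have hωHω : ω * H * ω = c • ω := by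
      rw [hωeq]
      calc (U * diagonal d * star U) * H * (U * diagonal d * star U)
          = U * (diagonal d * (star U * H * U) * diagonal d) * star U := by
            noncomm_ring
        _ = U * ((c • diagonal d)) * star U := by rw [hdiag]
        _ = c • (U * diagonal d * star U) := by
            rw [Matrix.mul_smul, Matrix.smul_mul]
    have hHω : H * ω = ω * H * ω := by
      calc H * ω = H * (ω * ω) := by rw [hproj]
        _ = (H * ω) * ω := by rw [mul_assoc]
        _ = ω * H * ω := by rw [← hcomm]
    have hcreal : (starRingEnd ℂ) c = c := by
      have hNherm : (star U * H * U)ᴴ = star U * H * U := by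
        rw [conjTranspose_mul, conjTranspose_mul, hH.eq]
        simp [Matrix.star_eq_conjTranspose, mul_assoc]
      have := congrFun (congrFun hNherm i₀) i₀
      rw [conjTranspose_apply] at this
      exact this
    refine ⟨c.re, ?_⟩
    have : (c.re : ℂ) = c := Complex.conj_eq_iff_re.mp hcreal
    rw [hHω, hωHω, this]
end

section
/- For a rank-one projection ω = |ψ⟩⟨ψ| with Hψ = λψ (H Hermitian) and any skew-Hermitian A, the second derivative at t = 0 of t ↦ tr(e^{tA} ω e^{−tA} H) equals 2(⟨Aψ, H Aψ⟩ − λ⟨Aψ, Aψ⟩). -/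
open Matrix NormedSpace

variable {n : ℕ}

lemma expKey : (exp : Matrix (Fin n) (Fin n) ℂ → Matrix (Fin n) (Fin n) ℂ) = exp := by
  letI : SeminormedRing (Matrix (Fin n) (Fin n) ℂ) := Matrix.linftyOpSemiNormedRing
  letI : NormedRing (Matrix (Fin n) (Fin n) ℂ) := Matrix.linftyOpNormedRing
  letI : NormedAlgebra ℂ (Matrix (Fin n) (Fin n) ℂ) := Matrix.linftyOpNormedAlgebra
  letI : NormedAlgebra ℝ (Matrix (Fin n) (Fin n) ℂ) := Matrix.linftyOpNormedAlgebra
  exact rfl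

lemma L1 (A B C : Matrix (Fin n) (Fin n) ℂ) (t : ℝ) :
    HasDerivAt (fun u : ℝ => (exp (u • A) * B * exp (-(u • A)) * C).trace)
      ((exp (t • A) * (A * B - B * A) * exp (-(t • A)) * C).trace) t := by
  simp only [← smul_neg]
  letI : SeminormedRing (Matrix (Fin n) (Fin n) ℂ) := Matrix.linftyOpSemiNormedRing
  letI : NormedRing (Matrix (Fin n) (Fin n) ℂ) := Matrix.linftyOpNormedRing
  letI : NormedAlgebra ℂ (Matrix (Fin n) (Fin n) ℂ) := Matrix.linftyOpNormedAlgebra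
  letI : NormedAlgebra ℝ (Matrix (Fin n) (Fin n) ℂ) := Matrix.linftyOpNormedAlgebra
  have hE := hasDerivAt_exp_smul_const (𝕂 := ℝ) A t
  have hE' := hasDerivAt_exp_smul_const (𝕂 := ℝ) (-A) t
  have h := ((hE.mul_const B).mul hE').mul_const C
  let T : Matrix (Fin n) (Fin n) ℂ →L[ℝ] ℂ :=
    LinearMap.toContinuousLinearMap ((Matrix.traceLinearMap (Fin n) ℂ ℂ).restrictScalars ℝ)
  have h2 : HasDerivAt (fun u : ℝ => (exp (u • A) * B * exp (u • (-A)) * C).trace)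
      (((exp (t • A) * A * B * exp (t • (-A)) +
        exp (t • A) * B * (exp (t • (-A)) * (-A))) * C).trace) t :=
    T.hasFDerivAt.comp_hasDerivAt t h
  have hcomm : Commute (-A) (exp (t • (-A))) := ((Commute.refl (-A)).smul_right t).exp_right
  have hval : (exp (t • A) * A * B * exp (t • (-A)) +
        exp (t • A) * B * (exp (t • (-A)) * (-A))) * C
      = exp (t • A) * (A * B - B * A) * exp (t • (-A)) * C := by
    rw [hcomm.eq.symm]
    noncomm_ring
  rw [hval] at h2
  exact h2

lemma htr0 (u v : Fin n → ℂ) (X : Matrix (Fin n) (Fin n) ℂ) :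
    (X * vecMulVec u v).trace = v ⬝ᵥ (X *ᵥ u) := by
  simp only [Matrix.trace, Matrix.diag, Matrix.mul_apply, Matrix.vecMulVec_apply, dotProduct,
    Matrix.mulVec, Finset.mul_sum]
  exact Finset.sum_congr rfl fun i _ => Finset.sum_congr rfl fun j _ => by ring

lemma htr (u v : Fin n → ℂ) (M N : Matrix (Fin n) (Fin n) ℂ) :
    (M * vecMulVec u v * N).trace = v ⬝ᵥ ((N * M) *ᵥ u) := by
  rw [Matrix.trace_mul_cycle, htr0]

/-- For a rank-one projection `ω = |ψ⟩⟨ψ|` with `Hψ = λψ` (`H` Hermitian) and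
any skew-Hermitian `A`, the second derivative at `t = 0` of `t ↦ tr (e^{tA} ω e^{−tA} H)`
equals `2(⟨Aψ, H Aψ⟩ − λ⟨Aψ, Aψ⟩)`. -/
theorem second_deriv_expectation_at_eigenstate {n : ℕ}
    (H A : Matrix (Fin n) (Fin n) ℂ) (ψ : Fin n → ℂ) (lam : ℝ)
    (hH : H.IsHermitian)
    (hψ : star ψ ⬝ᵥ ψ = 1)
    (heig : H *ᵥ ψ = (lam : ℂ) • ψ)
    (hA : Aᴴ = -A) :
    deriv (deriv (fun t : ℝ =>
        (exp (t • A) * vecMulVec ψ (star ψ) * exp (-(t • A)) * H).trace)) 0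
      = 2 * (star (A *ᵥ ψ) ⬝ᵥ (H *ᵥ (A *ᵥ ψ))
          - (lam : ℂ) * (star (A *ᵥ ψ) ⬝ᵥ (A *ᵥ ψ))) := by
  have hd1 : deriv (fun t : ℝ =>
      (exp (t • A) * vecMulVec ψ (star ψ) * exp (-(t • A)) * H).trace)
      = fun t : ℝ => (exp (t • A) *
        (A * vecMulVec ψ (star ψ) - vecMulVec ψ (star ψ) * A) * exp (-(t • A)) * H).trace :=
    funext fun t => (L1 A _ H t).deriv
  rw [hd1, (L1 A (A * vecMulVec ψ (star ψ) - vecMulVec ψ (star ψ) * A) H 0).deriv]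
  simp only [zero_smul, neg_zero, exp_zero, one_mul, mul_one]
  have expand : (A * (A * vecMulVec ψ (star ψ) - vecMulVec ψ (star ψ) * A) -
        (A * vecMulVec ψ (star ψ) - vecMulVec ψ (star ψ) * A) * A) * H
      = A * A * vecMulVec ψ (star ψ) * H - A * vecMulVec ψ (star ψ) * (A * H)
        - A * vecMulVec ψ (star ψ) * (A * H) + 1 * vecMulVec ψ (star ψ) * (A * (A * H)) := by
    noncomm_ring
  rw [expand]
  simp only [Matrix.trace_sub, Matrix.trace_add, htr, Matrix.mul_one, ← Matrix.mulVec_mulVec]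
  have hsH : star ψ ᵥ* H = (lam : ℂ) • star ψ := by
    have h := congrArg star heig
    rw [Matrix.star_mulVec, hH.eq] at h
    simpa [star_smul, Complex.star_def, Complex.conj_ofReal] using h
  have hsA : star (A *ᵥ ψ) = -(star ψ ᵥ* A) := by
    rw [Matrix.star_mulVec, hA, Matrix.vecMul_neg]
  rw [hsA]
  rw [heig, Matrix.dotProduct_mulVec (star ψ) H, hsH]
  simp only [Matrix.mulVec_smul, dotProduct_smul, smul_dotProduct, neg_dotProduct,
    smul_eq_mul, ← Matrix.dotProduct_mulVec]
  ring
end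

section
/- Let B, C be Hermitian matrices on ℂ^n such that C has all eigenvalues simple with pairwise distinct differences (strongly regular), and the matrix of B in the eigenbasis of C is irreducible (its off-diagonal support graph is connected). If additionally tr B = tr C = 0, then the real Lie algebra generated by iB and iC is su(n). -/
open Matrix

attribute [local instance 100] LieRing.ofAssociativeRing

open Complex

namespace AltafiniAux
variable {n : ℕ}

noncomputable def Moff (j k : Fin n) (z : ℂ) : Matrix (Fin n) (Fin n) ℂ :=
  single j k z - single k j (starRingEnd ℂ z)

noncomputable def Dd (j k : Fin n) : Matrix (Fin n) (Fin n) ℂ :=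
  Complex.I • (single j j 1 - single k k 1)

lemma Dd_self (j : Fin n) : Dd j j = 0 := by simp [Dd]

lemma Dd_apply (j k a b : Fin n) : Dd j k a b
    = Complex.I * ((if j = a ∧ j = b then 1 else 0) - (if k = a ∧ k = b then 1 else 0)) := by
  simp [Dd, Matrix.smul_apply, Matrix.sub_apply, single, Matrix.of_apply]

lemma Moff_apply (j k : Fin n) (z : ℂ) (a b : Fin n) :
    Moff j k z a b = (if j = a ∧ k = b then z else 0)
      - (if k = a ∧ j = b then starRingEnd ℂ z else 0) := by
  simp [Moff, Matrix.sub_apply, single, Matrix.of_apply]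

lemma Moff_add (j k : Fin n) (z w : ℂ) :
    Moff j k (z + w) = Moff j k z + Moff j k w := by
  ext a b
  simp only [Moff_apply, Matrix.add_apply, map_add]
  split_ifs <;> ring

lemma Moff_real_smul (j k : Fin n) (r : ℝ) (z : ℂ) :
    Moff j k ((r : ℂ) * z) = r • Moff j k z := by
  ext a b
  simp only [Moff_apply, Matrix.smul_apply, _root_.map_mul, Complex.conj_ofReal]
  split_ifs <;> simp [Complex.real_smul] <;> ring

/-- product of two "off" matrices on the same pair -/
lemma MM {j k : Fin n} (hjk : j ≠ k) (u v u' v' : ℂ) :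
    (single j k u - single k j v) *
      (single j k u' - single k j v') =
    - single j j (u * v') - single k k (v * u') := by
  rw [sub_mul, mul_sub, mul_sub, single_mul_single_of_ne (c := u) (i := j) (j := k) (h := hjk.symm) (d := u'),
    single_mul_single_same, single_mul_single_same,
    single_mul_single_of_ne (c := v) (i := k) (j := j) (h := hjk) (d := v'), zero_sub, sub_zero]

lemma MC {j k l : Fin n} (hjk : j ≠ k) (hkl : k ≠ l) (hjl : j ≠ l) (u v u' v' : ℂ) :
    (single j k u - single k j v) *
      (single k l u' - single l k v') = single j l (u * u') := by
  rw [sub_mul, mul_sub, mul_sub, single_mul_single_same,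
    single_mul_single_of_ne (c := u) (i := j) (j := k) (h := hkl) (d := v'), single_mul_single_of_ne (c := v) (i := k) (j := j) (h := hjk) (d := u'),
    single_mul_single_of_ne (c := v) (i := k) (j := j) (h := hjl) (d := v')]
  simp

lemma DM {j k : Fin n} (hjk : j ≠ k) (u v : ℂ) :
    (single j j (1:ℂ) - single k k 1) *
      (single j k u - single k j v) =
    single j k u + single k j v := by
  rw [sub_mul, mul_sub, mul_sub, single_mul_single_same, single_mul_single_same,
    single_mul_single_of_ne (c := (1:ℂ)) (i := j) (j := j) (h := hjk) (d := v), single_mul_single_of_ne (c := (1:ℂ)) (i := k) (j := k) (h := hjk.symm) (d := u)]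
  simp

lemma MD {j k : Fin n} (hjk : j ≠ k) (u v : ℂ) :
    (single j k u - single k j v) *
      (single j j (1:ℂ) - single k k 1) =
    - single j k u - single k j v := by
  rw [sub_mul, mul_sub, mul_sub, single_mul_single_same, single_mul_single_same,
    single_mul_single_of_ne (c := u) (i := j) (j := k) (h := hjk.symm) (d := (1:ℂ)), single_mul_single_of_ne (c := v) (i := k) (j := j) (h := hjk) (d := (1:ℂ))]
  simp

lemma lie_Moff_Moff {j k : Fin n} (hjk : j ≠ k) (z w : ℂ) :
    ⁅Moff j k z, Moff j k w⁆ =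
      (starRingEnd ℂ z * w - z * starRingEnd ℂ w) •
        (single j j 1 - single k k 1) := by
  rw [Ring.lie_def, Moff, Moff, MM hjk, MM hjk, smul_sub, smul_single,
    smul_single, smul_eq_mul, mul_one]
  ext a b
  simp [single]
  split_ifs <;> ring

lemma lie_Moff_chain {j k l : Fin n} (hjk : j ≠ k) (hkl : k ≠ l) (hjl : j ≠ l)
    (z w : ℂ) : ⁅Moff j k z, Moff k l w⁆ = Moff j l (z * w) := by
  have h2 : (single k l w - single l k (starRingEnd ℂ w)) *
      (single j k z - single k j (starRingEnd ℂ z)) =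
      single l j (starRingEnd ℂ w * starRingEnd ℂ z) := by
    rw [sub_mul, mul_sub, mul_sub, single_mul_single_same,
      single_mul_single_of_ne (c := w) (i := k) (j := l) (h := hjl.symm) (d := z),
      single_mul_single_of_ne (c := w) (i := k) (j := l) (h := hkl.symm) (d := (starRingEnd ℂ z)),
      single_mul_single_of_ne (c := starRingEnd ℂ w) (i := l) (j := k) (h := hjk.symm) (d := z)]
    simp
  rw [Ring.lie_def, Moff, Moff, Moff, MC hjk hkl hjl, h2]
  ext a b
  simp [single]
  split_ifs <;> ring

lemma lie_Dd_Moff {j k : Fin n} (hjk : j ≠ k) (z : ℂ) :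
    ⁅Dd j k, Moff j k z⁆ = Moff j k (2 * Complex.I * z) := by
  rw [Ring.lie_def, Dd, Moff, Moff, smul_mul_assoc, DM hjk, mul_smul_comm, MD hjk]
  ext a b
  simp [single, map_ofNat]
  split_ifs <;> ring


lemma Tentry (c : Fin n → ℝ) (X : Matrix (Fin n) (Fin n) ℂ) (a b : Fin n) :
    ⁅Complex.I • (diagonal fun i => (c i : ℂ)), X⁆ a b
      = Complex.I * ((c a : ℂ) - (c b : ℂ)) * X a b := by
  rw [Ring.lie_def]
  simp only [Matrix.sub_apply, Matrix.smul_mul, Matrix.mul_smul, Matrix.smul_apply,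
    diagonal_mul, mul_diagonal, smul_eq_mul]
  ring

noncomputable def Q (c : Fin n → ℝ) (d : ℝ) (X : Matrix (Fin n) (Fin n) ℂ) :
    Matrix (Fin n) (Fin n) ℂ :=
  ⁅Complex.I • (diagonal fun i => (c i : ℂ)), ⁅Complex.I • (diagonal fun i => (c i : ℂ)), X⁆⁆
    + (d ^ 2 : ℝ) • X

noncomputable def Qs (c : Fin n → ℝ) (ds : List ℝ) (X : Matrix (Fin n) (Fin n) ℂ) :
    Matrix (Fin n) (Fin n) ℂ :=
  ds.foldr (Q c) X

lemma Q_entry (c : Fin n → ℝ) (d : ℝ) (X : Matrix (Fin n) (Fin n) ℂ) (a b : Fin n) :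
    Q c d X a b = ((d ^ 2 - (c a - c b) ^ 2 : ℝ) : ℂ) * X a b := by
  rw [Q, Matrix.add_apply, Tentry, Tentry, Matrix.smul_apply]
  push_cast
  rw [Complex.real_smul]
  push_cast
  ring_nf
  rw [Complex.I_sq]
  ring

lemma Qs_entry (c : Fin n → ℝ) (ds : List ℝ) (X : Matrix (Fin n) (Fin n) ℂ) (a b : Fin n) :
    Qs c ds X a b = (((ds.map fun d => d ^ 2 - (c a - c b) ^ 2).prod : ℝ) : ℂ) * X a b := by
  induction ds with
  | nil => simp [Qs]
  | cons d ds ih =>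
    have : Qs c (d :: ds) X = Q c d (Qs c ds X) := rfl
    rw [this, Q_entry, ih, List.map_cons, List.prod_cons]
    push_cast
    ring

lemma Qs_mem {c : Fin n → ℝ} (K : LieSubalgebra ℝ (Matrix (Fin n) (Fin n) ℂ))
    (hC : Complex.I • (diagonal fun i => (c i : ℂ)) ∈ K)
    {X : Matrix (Fin n) (Fin n) ℂ} (hX : X ∈ K) (ds : List ℝ) : Qs c ds X ∈ K := by
  induction ds with
  | nil => exact hX
  | cons d ds ih =>
    have : Qs c (d :: ds) X = Q c d (Qs c ds X) := rfl
    rw [this, Q]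
    exact K.add_mem (K.lie_mem hC (K.lie_mem hC ih)) (K.smul_mem _ ih)


lemma lie_diagC_Moff (c : Fin n → ℝ) {j k : Fin n} (hjk : j ≠ k) (z : ℂ) :
    ⁅Complex.I • (diagonal fun i => (c i : ℂ)), Moff j k z⁆
      = Moff j k (Complex.I * ((c j : ℂ) - (c k : ℂ)) * z) := by
  ext a b
  rw [Tentry, Moff_apply, Moff_apply]
  by_cases h1 : j = a ∧ k = b
  · obtain ⟨rfl, rfl⟩ := h1
    have h2 : ¬(k = j ∧ j = k) := fun h => hjk h.2
    simp [h2]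
  · by_cases h2 : k = a ∧ j = b
    · obtain ⟨rfl, rfl⟩ := h2
      have h1' : ¬(j = k ∧ k = j) := fun h => hjk h.1
      simp only [h1', if_false, and_self, if_true, _root_.map_mul, Complex.conj_I, map_sub,
        Complex.conj_ofReal]
      ring
    · simp [h1, h2]

lemma Dd_mem {K : LieSubalgebra ℝ (Matrix (Fin n) (Fin n) ℂ)} {j k : Fin n} (hjk : j ≠ k)
    {z : ℂ} (hz : z ≠ 0) {d : ℝ} (hd : d ≠ 0)
    (h1 : Moff j k z ∈ K) (h2 : Moff j k (Complex.I * (d : ℂ) * z) ∈ K) : Dd j k ∈ K := by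
  have hb := K.lie_mem h1 h2
  rw [lie_Moff_Moff hjk] at hb
  have hns : Complex.normSq z ≠ 0 := by simpa using hz
  have hexp : starRingEnd ℂ z * (Complex.I * (d : ℂ) * z)
      - z * starRingEnd ℂ (Complex.I * (d : ℂ) * z)
      = 2 * Complex.I * (d : ℂ) * (Complex.normSq z : ℂ) := by
    simp only [_root_.map_mul, Complex.conj_I, Complex.conj_ofReal]
    rw [← Complex.mul_conj z]
    ring
  have hcoeff : ((2 * d * Complex.normSq z)⁻¹ : ℝ) •
      (starRingEnd ℂ z * (Complex.I * (d : ℂ) * z)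
        - z * starRingEnd ℂ (Complex.I * (d : ℂ) * z)) = Complex.I := by
    rw [hexp, Complex.real_smul]
    have h2d : (2 * d * Complex.normSq z : ℝ) ≠ 0 :=
      mul_ne_zero (mul_ne_zero two_ne_zero hd) hns
    push_cast
    have hd' : (d : ℂ) ≠ 0 := Complex.ofReal_ne_zero.mpr hd
    have hns' : ((Complex.normSq z : ℝ) : ℂ) ≠ 0 := Complex.ofReal_ne_zero.mpr hns
    field_simp
  have h3 : ((2 * d * Complex.normSq z)⁻¹ : ℝ) •
      ((starRingEnd ℂ z * (Complex.I * (d : ℂ) * z)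
        - z * starRingEnd ℂ (Complex.I * (d : ℂ) * z)) •
        (single j j (1:ℂ) - single k k 1)) = Dd j k := by
    rw [← smul_assoc, Dd]
    congr 1
  exact h3 ▸ K.smul_mem _ hb

lemma Moff_all_mem {K : LieSubalgebra ℝ (Matrix (Fin n) (Fin n) ℂ)} {j k : Fin n} (hjk : j ≠ k)
    {z : ℂ} (hz : z ≠ 0) {d : ℝ} (hd : d ≠ 0)
    (h1 : Moff j k z ∈ K) (h2 : Moff j k (Complex.I * (d : ℂ) * z) ∈ K) :
    ∀ w, Moff j k w ∈ K := by
  have hDd := Dd_mem hjk hz hd h1 h2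
  have h3 : Moff j k (2 * Complex.I * z) ∈ K := by
    rw [← lie_Dd_Moff hjk]
    exact K.lie_mem hDd h1
  intro w
  have hw : w = (((w / z).re : ℝ) : ℂ) * z
      + (((w / z).im / 2 : ℝ) : ℂ) * (2 * Complex.I * z) := by
    have h0 : (((w / z).re : ℂ) + ((w / z).im : ℂ) * Complex.I) * z = w := by
      rw [Complex.re_add_im]
      exact div_mul_cancel₀ w hz
    calc w = (((w / z).re : ℂ) + ((w / z).im : ℂ) * Complex.I) * z := h0.symm
      _ = _ := by push_cast; ring
  rw [hw, Moff_add, Moff_real_smul, Moff_real_smul]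
  exact K.add_mem (K.smul_mem _ h1) (K.smul_mem _ h3)

noncomputable def su (n : ℕ) : LieSubalgebra ℝ (Matrix (Fin n) (Fin n) ℂ) where
  carrier := {A : Matrix (Fin n) (Fin n) ℂ | Aᴴ = -A ∧ A.trace = 0}
  add_mem' := fun ha hb => ⟨by rw [conjTranspose_add, ha.1, hb.1, neg_add],
    by rw [trace_add, ha.2, hb.2, add_zero]⟩
  zero_mem' := ⟨by simp, by simp⟩
  smul_mem' := fun r A hA => ⟨by rw [conjTranspose_smul, star_trivial, hA.1, smul_neg],
    by rw [trace_smul, hA.2, smul_zero]⟩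
  lie_mem' := fun {x y} hx hy => by
    constructor
    · rw [Ring.lie_def, conjTranspose_sub, conjTranspose_mul, conjTranspose_mul,
        hx.1, hy.1]
      simp only [Matrix.neg_mul, Matrix.mul_neg, neg_neg, neg_sub]
    · rw [Ring.lie_def, trace_sub, trace_mul_comm, sub_self]

end AltafiniAux


/-- Altafini's controllability criterion: Let `C` be a traceless Hermitian
matrix, represented in its eigenbasis as `diagonal c` with simple eigenvalues whose pairwise
differences are distinct (strong regularity), and let `B` be a traceless Hermitian matrix
whose off-diagonal support graph (in the eigenbasis of `C`) is connected. Then the real Lie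
algebra generated by `iB` and `iC` is `su(n)`, the traceless skew-Hermitian matrices. -/
theorem altafini_controllability {n : ℕ}
    (B : Matrix (Fin n) (Fin n) ℂ) (c : Fin n → ℝ)
    (hB : B.IsHermitian) (hBtr : B.trace = 0)
    (hCtr : (Matrix.diagonal fun j => (c j : ℂ)).trace = 0)
    -- `C` has non-degenerate (simple) eigenvalues:
    (hinj : Function.Injective c)
    -- the eigenvalue differences are pairwise distinct (non-degenerate resonance):
    (hreg : ∀ j k j' k' : Fin n, j ≠ k → j' ≠ k' →
      c j - c k = c j' - c k' → j = j' ∧ k = k')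
    -- the support graph of `B` in the eigenbasis of `C` is connected:
    (hconn : ∀ j k : Fin n, Relation.ReflTransGen (fun a b => a ≠ b ∧ B a b ≠ 0) j k) :
    (LieSubalgebra.lieSpan ℝ (Matrix (Fin n) (Fin n) ℂ)
        {Complex.I • B, Complex.I • Matrix.diagonal fun j => (c j : ℂ)} : Set _)
      = {A : Matrix (Fin n) (Fin n) ℂ | Aᴴ = -A ∧ A.trace = 0} := by
  classical
  set L := LieSubalgebra.lieSpan ℝ (Matrix (Fin n) (Fin n) ℂ)
      {Complex.I • B, Complex.I • Matrix.diagonal fun j => (c j : ℂ)} with hLdef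
  apply Set.Subset.antisymm
  · -- easy inclusion: L ⊆ su(n)
    have hle : L ≤ AltafiniAux.su n := by
      apply LieSubalgebra.lieSpan_le.mpr
      rintro y (rfl | rfl)
      · refine ⟨?_, ?_⟩
        · rw [conjTranspose_smul, hB.eq, Complex.star_def, Complex.conj_I, neg_smul]
        · rw [trace_smul, hBtr, smul_zero]
      · refine ⟨?_, ?_⟩
        · rw [conjTranspose_smul, diagonal_conjTranspose, Complex.star_def, Complex.conj_I,
            neg_smul]
          have hst : (star fun j => ((c j : ℝ) : ℂ)) = fun j => ((c j : ℝ) : ℂ) :=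
            funext fun i => Complex.conj_ofReal _
          rw [hst]
        · rw [trace_smul, hCtr, smul_zero]
    intro x hx
    exact hle hx
  · -- hard inclusion
    intro A hA
    obtain ⟨hA1, hA2⟩ := hA
    have hBmem : Complex.I • B ∈ L := LieSubalgebra.subset_lieSpan (Set.mem_insert _ _)
    have hCmem : Complex.I • (Matrix.diagonal fun j => (c j : ℂ)) ∈ L :=
      LieSubalgebra.subset_lieSpan (Set.mem_insert_of_mem _ rfl)
    have hBherm : ∀ a b : Fin n, starRingEnd ℂ (B a b) = B b a := by
      intro a b
      have := congrFun (congrFun hB.eq b) a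
      simpa [conjTranspose_apply] using this
    -- step 1: single-edge extraction
    have key1 : ∀ j k : Fin n, j ≠ k → B j k ≠ 0 →
        ∃ z : ℂ, z ≠ 0 ∧ AltafiniAux.Moff j k z ∈ L := by
      intro j k hjk hBjk
      have hδ : c j - c k ≠ 0 := sub_ne_zero.mpr (fun h => hjk (hinj h))
      set S : Finset (Fin n × Fin n) :=
        Finset.univ.filter (fun p => (c p.1 - c p.2) ^ 2 ≠ (c j - c k) ^ 2) with hS
      set ds : List ℝ := S.toList.map (fun p => c p.1 - c p.2) with hdsdef
      set X : Matrix (Fin n) (Fin n) ℂ :=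
        ⁅Complex.I • (Matrix.diagonal fun i => (c i : ℂ)), Complex.I • B⁆ with hXdef
      have hXmem : X ∈ L := L.lie_mem hCmem hBmem
      have hXab : ∀ a b : Fin n,
          X a b = Complex.I * ((c a : ℂ) - (c b : ℂ)) * (Complex.I * B a b) := by
        intro a b
        rw [hXdef, AltafiniAux.Tentry]
        simp [Matrix.smul_apply]
      set κ : ℝ := (ds.map fun d => d ^ 2 - (c j - c k) ^ 2).prod with hκdef
      have hκ : κ ≠ 0 := by
        rw [hκdef]
        apply List.prod_ne_zero
        intro h0
        rw [List.mem_map] at h0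
        obtain ⟨d, hd, hd0⟩ := h0
        rw [hdsdef, List.mem_map] at hd
        obtain ⟨p, hp, rfl⟩ := hd
        rw [Finset.mem_toList, hS, Finset.mem_filter] at hp
        exact hp.2 (sub_eq_zero.mp hd0)
      have hzne : (κ : ℂ) * X j k ≠ 0 := by
        rw [hXab]
        apply mul_ne_zero (Complex.ofReal_ne_zero.mpr hκ)
        apply mul_ne_zero (mul_ne_zero Complex.I_ne_zero ?_)
          (mul_ne_zero Complex.I_ne_zero hBjk)
        rw [← Complex.ofReal_sub]
        exact Complex.ofReal_ne_zero.mpr hδ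
      refine ⟨(κ : ℂ) * X j k, hzne, ?_⟩
      have hY : AltafiniAux.Qs c ds X ∈ L := AltafiniAux.Qs_mem L hCmem hXmem ds
      have hYeq : AltafiniAux.Qs c ds X = AltafiniAux.Moff j k ((κ : ℂ) * X j k) := by
        ext a b
        rw [AltafiniAux.Qs_entry, AltafiniAux.Moff_apply]
        by_cases h1 : j = a ∧ k = b
        · obtain ⟨rfl, rfl⟩ := h1
          have h2 : ¬(k = j ∧ j = k) := fun h => hjk h.2
          rw [if_pos ⟨rfl, rfl⟩, if_neg h2, sub_zero, ← hκdef]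
        · by_cases h2 : k = a ∧ j = b
          · obtain ⟨rfl, rfl⟩ := h2
            rw [if_neg h1, if_pos ⟨rfl, rfl⟩, zero_sub]
            have hmapeq : (ds.map fun d => d ^ 2 - (c k - c j) ^ 2)
                = ds.map fun d => d ^ 2 - (c j - c k) ^ 2 := by
              apply List.map_congr_left
              intro d _
              ring
            rw [hmapeq, ← hκdef, hXab, hXab]
            simp only [_root_.map_mul, map_sub, Complex.conj_I, Complex.conj_ofReal, hBherm]
            ring
          · rw [if_neg h1, if_neg h2, sub_zero]
            by_cases hab : a = b
            · subst hab
              rw [hXab]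
              simp
            · have hsq : (c a - c b) ^ 2 ≠ (c j - c k) ^ 2 := by
                intro hcontra
                have := sq_eq_sq_iff_eq_or_eq_neg.mp hcontra
                rcases this with h | h
                · obtain ⟨rfl, rfl⟩ := hreg a b j k hab hjk h
                  exact h1 ⟨rfl, rfl⟩
                · have h' : c a - c b = c k - c j := by linarith
                  obtain ⟨rfl, rfl⟩ := hreg a b k j hab hjk.symm h'
                  exact h2 ⟨rfl, rfl⟩
              have hmem0 : (0 : ℝ) ∈ ds.map fun d => d ^ 2 - (c a - c b) ^ 2 := by
                rw [List.mem_map]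
                refine ⟨c a - c b, ?_, by ring⟩
                rw [hdsdef, List.mem_map]
                refine ⟨(a, b), ?_, rfl⟩
                rw [Finset.mem_toList, hS, Finset.mem_filter]
                exact ⟨Finset.mem_univ _, hsq⟩
              rw [List.prod_eq_zero hmem0]
              simp
      rw [hYeq] at hY
      exact hY
    -- step 2: all directions on an edge of B
    have key2 : ∀ j k : Fin n, j ≠ k → B j k ≠ 0 → ∀ w, AltafiniAux.Moff j k w ∈ L := by
      intro j k hjk hBjk
      obtain ⟨z, hz, hzmem⟩ := key1 j k hjk hBjk
      have hδ : c j - c k ≠ 0 := sub_ne_zero.mpr (fun h => hjk (hinj h))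
      have h2 : AltafiniAux.Moff j k (Complex.I * ((c j - c k : ℝ) : ℂ) * z) ∈ L := by
        have hl := L.lie_mem hCmem hzmem
        rw [AltafiniAux.lie_diagC_Moff c hjk] at hl
        rw [Complex.ofReal_sub]
        exact hl
      exact AltafiniAux.Moff_all_mem hjk hz hδ hzmem h2
    -- step 3: all pairs by connectivity
    have key3 : ∀ j k : Fin n, j ≠ k → ∀ w, AltafiniAux.Moff j k w ∈ L := by
      intro j k hjk
      have hpath := hconn j k
      revert hjk
      induction hpath with
      | refl => intro h; exact absurd rfl h
      | @tail b k' hjb hbk ih =>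
        intro hjk' w
        obtain ⟨hbkne, hBbk⟩ := hbk
        have hbmem : ∀ w, AltafiniAux.Moff b k' w ∈ L := key2 _ _ hbkne hBbk
        by_cases hjb' : j = b
        · subst hjb'
          exact hbmem w
        · have hMjb := ih hjb'
          have hlie : AltafiniAux.Moff j k' w
              = ⁅AltafiniAux.Moff j b 1, AltafiniAux.Moff b k' w⁆ := by
            rw [AltafiniAux.lie_Moff_chain hjb' hbkne hjk', one_mul]
          rw [hlie]
          exact L.lie_mem (hMjb 1) (hbmem w)
    -- step 4: all diagonal generators
    have key4 : ∀ j k : Fin n, AltafiniAux.Dd j k ∈ L := by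
      intro j k
      by_cases hjk : j = k
      · subst hjk
        rw [AltafiniAux.Dd_self]
        exact L.zero_mem
      · have hδ : c j - c k ≠ 0 := sub_ne_zero.mpr (fun h => hjk (hinj h))
        exact AltafiniAux.Dd_mem hjk one_ne_zero hδ (key3 j k hjk 1) (key3 j k hjk _)

    -- final assembly
    rcases Nat.eq_zero_or_pos n with hn | hn
    · subst hn
      have hA0 : A = 0 := by ext i j; exact i.elim0
      rw [hA0]
      exact L.zero_mem
    · set j₀ : Fin n := ⟨0, hn⟩ with hj₀
      set t : Fin n → ℝ := fun j => (A j j).im with ht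
      have hskew : ∀ a b : Fin n, starRingEnd ℂ (A b a) = -A a b := by
        intro a b
        have h := congrFun (congrFun hA1 a) b
        simpa [conjTranspose_apply] using h
      have hdiag : ∀ j, A j j = (t j : ℂ) * Complex.I := by
        intro j
        have h := hskew j j
        have hre : (A j j).re = 0 := by
          have := congrArg Complex.re h
          simp at this
          linarith
        apply Complex.ext
        · simp [hre]
        · simp [ht]
      have hsum : ∑ j, t j = 0 := by
        have h := congrArg Complex.im hA2
        rw [Matrix.trace] at h
        simpa [Matrix.diag, ht] using h
      set F : Fin n × Fin n → Matrix (Fin n) (Fin n) ℂ := fun p =>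
        if p.1 = p.2 then (t p.1) • AltafiniAux.Dd p.1 j₀
        else ((1:ℝ)/2) • AltafiniAux.Moff p.1 p.2 (A p.1 p.2) with hF
      have hFmem : ∀ p, F p ∈ L := by
        intro p
        rw [hF]
        dsimp only
        split_ifs with hp
        · exact L.smul_mem _ (key4 _ _)
        · exact L.smul_mem _ (key3 _ _ hp _)
      have hAeq : A = ∑ p : Fin n × Fin n, F p := by
        ext a b
        rw [Matrix.sum_apply]
        by_cases hab : a = b
        · subst hab
          have hFval : ∀ p : Fin n × Fin n, F p a a =
              (if p.1 = p.2 then ((t p.1 : ℂ) *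
                ((if p.1 = a then 1 else 0) - (if j₀ = a then 1 else 0)) * Complex.I)
               else 0) := by
            intro p
            simp only [hF]
            by_cases hp : p.1 = p.2
            · rw [if_pos hp, if_pos hp, Matrix.smul_apply, AltafiniAux.Dd_apply,
                Complex.real_smul]
              simp only [and_self]
              ring
            · rw [if_neg hp, if_neg hp, Matrix.smul_apply, AltafiniAux.Moff_apply]
              have h1 : ¬(p.1 = a ∧ p.2 = a) := fun h => hp (h.1.trans h.2.symm)
              have h2 : ¬(p.2 = a ∧ p.1 = a) := fun h => hp (h.2.trans h.1.symm)
              rw [if_neg h1, if_neg h2]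
              simp
          rw [Finset.sum_congr rfl fun p _ => hFval p, Fintype.sum_prod_type]
          have hinner : ∀ x : Fin n, (∑ y : Fin n, if x = y then ((t x : ℂ) *
                ((if x = a then 1 else 0) - (if j₀ = a then 1 else 0)) * Complex.I)
               else 0) = ((t x : ℂ) *
                ((if x = a then 1 else 0) - (if j₀ = a then 1 else 0)) * Complex.I) := by
            intro x
            simp [Finset.sum_ite_eq]
          rw [Finset.sum_congr rfl fun x _ => hinner x]
          have hsplit : (∑ x : Fin n, ((t x : ℂ) *
                ((if x = a then 1 else 0) - (if j₀ = a then 1 else 0)) * Complex.I))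
              = (∑ x : Fin n, if x = a then (t x : ℂ) * Complex.I else 0)
                - (∑ x : Fin n, (t x : ℂ)) * ((if j₀ = a then 1 else 0) * Complex.I) := by
            rw [Finset.sum_mul, ← Finset.sum_sub_distrib]
            apply Finset.sum_congr rfl
            intro x _
            split_ifs <;> ring
          rw [hsplit]
          have hz2 : (∑ x : Fin n, (t x : ℂ)) = 0 := by
            rw [← Complex.ofReal_sum, hsum, Complex.ofReal_zero]
          rw [hz2, zero_mul, sub_zero, Finset.sum_ite_eq' Finset.univ a
            (fun x => (t x : ℂ) * Complex.I), if_pos (Finset.mem_univ a)]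
          exact hdiag a
        · have hFval : ∀ p : Fin n × Fin n, F p a b =
              (if p = (a, b) then (1/2 : ℂ) * A a b else 0)
              + (if p = (b, a) then (1/2 : ℂ) * A a b else 0) := by
            rintro ⟨p1, p2⟩
            simp only [hF, Prod.mk.injEq]
            by_cases hp : p1 = p2
            · subst hp
              rw [if_pos rfl, Matrix.smul_apply, AltafiniAux.Dd_apply]
              have h1 : ¬(p1 = a ∧ p1 = b) := fun h => hab (h.1.symm.trans h.2)
              have h2 : ¬(j₀ = a ∧ j₀ = b) := fun h => hab (h.1.symm.trans h.2)
              have h4 : ¬(p1 = b ∧ p1 = a) := fun h => hab (h.2.symm.trans h.1)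
              rw [if_neg h1, if_neg h2, if_neg h1, if_neg h4]
              simp
            · rw [if_neg hp, Matrix.smul_apply, AltafiniAux.Moff_apply]
              by_cases h3 : p1 = a ∧ p2 = b
              · obtain ⟨rfl, rfl⟩ := h3
                rw [if_pos ⟨rfl, rfl⟩, if_neg (fun h => hab (h.2 : p1 = p2)),
                  if_pos ⟨rfl, rfl⟩, if_neg (fun h => hab (h.1 : p1 = p2)),
                  sub_zero, add_zero, Complex.real_smul]
                push_cast
                ring
              · by_cases h4 : p1 = b ∧ p2 = a
                · obtain ⟨rfl, rfl⟩ := h4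
                  rw [if_neg (fun h => hab (h.2 : p2 = p1)),
                    if_pos ⟨rfl, rfl⟩, if_neg (fun h => hab (h.2 : p2 = p1)),
                    if_pos ⟨rfl, rfl⟩, zero_sub, zero_add, hskew, Complex.real_smul]
                  push_cast
                  ring
                · rw [if_neg h3, if_neg (fun h => h4 ⟨h.2, h.1⟩), if_neg h3, if_neg h4]
                  simp
          rw [Finset.sum_congr rfl fun p _ => hFval p, Finset.sum_add_distrib,
            Finset.sum_ite_eq' Finset.univ ((a, b) : Fin n × Fin n)
              (fun _ => (1/2 : ℂ) * A a b),
            Finset.sum_ite_eq' Finset.univ ((b, a) : Fin n × Fin n)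
              (fun _ => (1/2 : ℂ) * A a b),
            if_pos (Finset.mem_univ _), if_pos (Finset.mem_univ _)]
          ring
      rw [hAeq]
      exact sum_mem fun p _ => hFmem p
end
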